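/- arXiv:2310.08239 — 2 statements merged into one kernel-verified Lean document; each statement's English description precedes it below -/
import Mathlib

section
/- Let Hₙ be a real symmetric centrosymmetric positive definite matrix of size (n+1)×(n+1), and H_{n+1} a real symmetric centrosymmetric positive definite matrix of size (n+2)×(n+2). Let C₁, C₂ be real (n+1)×(n+1) matrices with C₁ ⇌ C₂ and D₁, D₂ real (n+2)×(n+1) matrices with D₁ ⇌ D₂. Define A_i = Hₙ^{1/2} · D_iᵀ · (H_{n+1}^{1/2})⁻¹ and B_i = (Hₙ^{1/2})⁻¹ · C_i · Hₙ^{1/2} for i = 1, 2, where M^{1/2} denotes the unique symmetric positive semidefinite square root of M. Then A₁ ⇌ A₂ and B₁ ⇌ B₂; equivalently, the block-diagonal matrices diag(A₁, A₂) and diag(B₁, B₂) are centrosymmetric. -/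
open Matrix

/-- `X ⇌ Y`: each of `X`, `Y` is the reverse of the other, i.e.
`xᵢⱼ = y_{m-i, n-j}` for all `i`, `j` (indices starting at `0`). -/
def ReverseRel {m n : ℕ} (X Y : Matrix (Fin m) (Fin n) ℝ) : Prop :=
  ∀ i j, X i j = Y i.rev j.rev

/-- A real matrix `X` is centrosymmetric if `xᵢⱼ = x_{m-i, n-j}` for all `i`, `j`. -/
def Centrosymmetric {m n : ℕ} (X : Matrix (Fin m) (Fin n) ℝ) : Prop :=
  ∀ i j, X i j = X i.rev j.rev

open scoped ComplexOrder in
/-- The positive semidefinite square root, as `Matrix.PosSemidef.sqrt` was defined in the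
older Mathlib (removed since). -/
noncomputable def Matrix.PosSemidef.sqrt {n : Type*} [Fintype n] [DecidableEq n] {𝕜 : Type*}
    [RCLike 𝕜] {A : Matrix n n 𝕜} (hA : A.PosSemidef) : Matrix n n 𝕜 :=
  hA.1.eigenvectorUnitary.1 * diagonal ((↑) ∘ (√·) ∘ hA.1.eigenvalues) *
  (star hA.1.eigenvectorUnitary : Matrix n n 𝕜)

section sqrtPort
open scoped MatrixOrder

lemma Matrix.PosSemidef.sqrt_eq_cfcSqrt {n : Type*} [Fintype n] [DecidableEq n]
    {A : Matrix n n ℝ} (hA : A.PosSemidef) : hA.sqrt = CFC.sqrt A := by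
  rw [CFC.sqrt_eq_cfc, cfc_nnreal_eq_real _ A hA.nonneg, hA.1.cfc_eq]
  simp only [IsHermitian.cfc, Matrix.PosSemidef.sqrt, Unitary.conjStarAlgAut_apply]
  congr 2
  funext i
  congr 2
  funext j
  simp [max_eq_left (hA.eigenvalues_nonneg j)]

lemma Matrix.PosSemidef.posSemidef_sqrt {n : Type*} [Fintype n] [DecidableEq n]
    {A : Matrix n n ℝ} (hA : A.PosSemidef) : hA.sqrt.PosSemidef := by
  rw [hA.sqrt_eq_cfcSqrt]; exact (CFC.sqrt_nonneg A).posSemidef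

lemma Matrix.PosSemidef.sqrt_mul_self {n : Type*} [Fintype n] [DecidableEq n]
    {A : Matrix n n ℝ} (hA : A.PosSemidef) : hA.sqrt * hA.sqrt = A := by
  rw [hA.sqrt_eq_cfcSqrt]; exact CFC.sqrt_mul_sqrt_self A hA.nonneg

lemma Matrix.PosSemidef.eq_sqrt_of_sq_eq {n : Type*} [Fintype n] [DecidableEq n]
    {A B : Matrix n n ℝ} (hB : B.PosSemidef) (hA : A.PosSemidef) (h : B ^ 2 = A) :
    B = hA.sqrt := by
  rw [hA.sqrt_eq_cfcSqrt, eq_comm]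
  exact CFC.sqrt_unique (by rw [← sq, h]) hB.nonneg

end sqrtPort

/-- The exchange (reversal) matrix. -/
noncomputable def revMat (m : ℕ) : Matrix (Fin m) (Fin m) ℝ :=
  Matrix.of fun i j => if j = i.rev then (1 : ℝ) else 0

lemma revMat_mul {m n : ℕ} (X : Matrix (Fin m) (Fin n) ℝ) (i : Fin m) (j : Fin n) :
    (revMat m * X) i j = X i.rev j := by
  simp [revMat, Matrix.mul_apply, eq_comm]

lemma mul_revMat {m n : ℕ} (X : Matrix (Fin m) (Fin n) ℝ) (i : Fin m) (j : Fin n) :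
    (X * revMat n) i j = X i j.rev := by
  simp_rw [revMat, Matrix.mul_apply, Matrix.of_apply, ← Fin.rev_eq_iff,
    mul_ite, mul_one, mul_zero]
  simp [eq_comm]

lemma revMat_sq (m : ℕ) : revMat m * revMat m = 1 := by
  ext i j
  rw [revMat_mul]
  simp only [revMat, Matrix.of_apply, Fin.rev_rev, Matrix.one_apply, eq_comm]

lemma revMat_transpose (m : ℕ) : (revMat m)ᵀ = revMat m := by
  ext i j
  simp only [Matrix.transpose_apply, revMat, Matrix.of_apply]
  by_cases h : i = j.rev
  · subst h; simp
  · rw [if_neg h, if_neg fun hh => h (by rw [hh, Fin.rev_rev])]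

lemma reverseRel_iff {m n : ℕ} (X Y : Matrix (Fin m) (Fin n) ℝ) :
    ReverseRel X Y ↔ X = revMat m * Y * revMat n := by
  constructor
  · intro h; ext i j; rw [mul_revMat, revMat_mul]; exact h i j
  · intro h i j; rw [h, mul_revMat, revMat_mul]

/-- The square root of a centrosymmetric positive definite matrix is centrosymmetric. -/
lemma sqrt_centro {m : ℕ} {H : Matrix (Fin m) (Fin m) ℝ} (hpd : H.PosDef)
    (hc : Centrosymmetric H) :
    hpd.posSemidef.sqrt = revMat m * hpd.posSemidef.sqrt * revMat m := by
  set S := hpd.posSemidef.sqrt with hS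
  have hpsd : Matrix.PosSemidef (revMat m * S * revMat m) := by
    have := hpd.posSemidef.posSemidef_sqrt.conjTranspose_mul_mul_same (revMat m)
    simpa [revMat_transpose] using this
  have hsq : (revMat m * S * revMat m) ^ 2 = H := by
    have h1 : (revMat m * S * revMat m) ^ 2 = revMat m * (S * S) * revMat m := by
      rw [pow_two]
      calc revMat m * S * revMat m * (revMat m * S * revMat m)
          = revMat m * S * (revMat m * revMat m) * S * revMat m := by
            simp only [Matrix.mul_assoc]
        _ = revMat m * (S * S) * revMat m := by
            rw [revMat_sq]; simp only [Matrix.mul_one, Matrix.one_mul, Matrix.mul_assoc]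
    rw [h1, hpd.posSemidef.sqrt_mul_self]
    exact ((reverseRel_iff H H).mp hc).symm
  exact (hpsd.eq_sqrt_of_sq_eq hpd.posSemidef hsq).symm

lemma sqrt_isUnit {m : ℕ} {H : Matrix (Fin m) (Fin m) ℝ} (hpd : H.PosDef) :
    IsUnit hpd.posSemidef.sqrt := by
  rw [Matrix.isUnit_iff_isUnit_det]
  have h1 : hpd.posSemidef.sqrt.det * hpd.posSemidef.sqrt.det = H.det := by
    rw [← Matrix.det_mul, hpd.posSemidef.sqrt_mul_self]
  have hu : IsUnit H.det := hpd.det_pos.ne'.isUnit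
  rw [← h1] at hu
  exact isUnit_of_mul_isUnit_left hu

/-- The inverse of the square root of a centrosymmetric PD matrix is centrosymmetric. -/
lemma sqrt_inv_centro {m : ℕ} {H : Matrix (Fin m) (Fin m) ℝ} (hpd : H.PosDef)
    (hc : Centrosymmetric H) :
    (hpd.posSemidef.sqrt)⁻¹ = revMat m * (hpd.posSemidef.sqrt)⁻¹ * revMat m := by
  set S := hpd.posSemidef.sqrt with hS
  have hinv : S⁻¹ * S = 1 := Matrix.nonsing_inv_mul S ((Matrix.isUnit_iff_isUnit_det S).mp
    (sqrt_isUnit hpd))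
  refine Matrix.inv_eq_left_inv ?_
  calc revMat m * S⁻¹ * revMat m * S
      = revMat m * S⁻¹ * revMat m * (revMat m * S * revMat m) := by
        rw [← sqrt_centro hpd hc]
    _ = revMat m * S⁻¹ * (revMat m * revMat m) * S * revMat m := by
        simp only [Matrix.mul_assoc]
    _ = revMat m * (S⁻¹ * S) * revMat m := by
        rw [revMat_sq]; simp only [Matrix.mul_one, Matrix.one_mul, Matrix.mul_assoc]
    _ = 1 := by rw [hinv, Matrix.mul_one, revMat_sq]

/-- Let `Hₙ` and `H_{n+1}` be symmetric centrosymmetric positive definite matrices (of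
sizes `n+1` and `n+2`), `C₁ ⇌ C₂` square of size `n+1` and `D₁ ⇌ D₂` of size
`(n+2) × (n+1)`.  With `Aᵢ = Hₙ^(1/2) Dᵢᵀ (H_{n+1}^(1/2))⁻¹` and
`Bᵢ = (Hₙ^(1/2))⁻¹ Cᵢ Hₙ^(1/2)` (`M^(1/2)` the positive semidefinite square root),
one has `A₁ ⇌ A₂` and `B₁ ⇌ B₂`. -/
theorem orthonormal_three_term_coefficients_reverseRel (n : ℕ)
    (Hn : Matrix (Fin (n + 1)) (Fin (n + 1)) ℝ)
    (Hn1 : Matrix (Fin (n + 2)) (Fin (n + 2)) ℝ)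
    (hHnsym : Hn.IsSymm) (hHnpd : Hn.PosDef) (hHnc : Centrosymmetric Hn)
    (hHn1sym : Hn1.IsSymm) (hHn1pd : Hn1.PosDef) (hHn1c : Centrosymmetric Hn1)
    (C₁ C₂ : Matrix (Fin (n + 1)) (Fin (n + 1)) ℝ) (hC : ReverseRel C₁ C₂)
    (D₁ D₂ : Matrix (Fin (n + 2)) (Fin (n + 1)) ℝ) (hD : ReverseRel D₁ D₂) :
    ReverseRel
        (hHnpd.posSemidef.sqrt * D₁ᵀ * (hHn1pd.posSemidef.sqrt)⁻¹)
        (hHnpd.posSemidef.sqrt * D₂ᵀ * (hHn1pd.posSemidef.sqrt)⁻¹) ∧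
      ReverseRel
        ((hHnpd.posSemidef.sqrt)⁻¹ * C₁ * hHnpd.posSemidef.sqrt)
        ((hHnpd.posSemidef.sqrt)⁻¹ * C₂ * hHnpd.posSemidef.sqrt) := by
  set S := hHnpd.posSemidef.sqrt with hS
  set T := hHn1pd.posSemidef.sqrt with hT
  have hSc := sqrt_centro hHnpd hHnc
  have hSic := sqrt_inv_centro hHnpd hHnc
  have hTic := sqrt_inv_centro hHn1pd hHn1c
  have hD' : D₁ᵀ = revMat (n + 1) * D₂ᵀ * revMat (n + 2) := by
    have := (reverseRel_iff D₁ D₂).mp hD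
    rw [this]
    rw [Matrix.transpose_mul, Matrix.transpose_mul, revMat_transpose, revMat_transpose]
    simp [Matrix.mul_assoc]
  have hC' : C₁ = revMat (n + 1) * C₂ * revMat (n + 1) := (reverseRel_iff C₁ C₂).mp hC
  constructor
  · rw [reverseRel_iff]
    calc S * D₁ᵀ * T⁻¹
        = (revMat (n + 1) * S * revMat (n + 1)) * (revMat (n + 1) * D₂ᵀ * revMat (n + 2)) *
            (revMat (n + 2) * T⁻¹ * revMat (n + 2)) := by rw [← hSc, ← hD', ← hTic]
      _ = revMat (n + 1) * S * (revMat (n + 1) * revMat (n + 1)) * D₂ᵀ *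
            (revMat (n + 2) * revMat (n + 2)) * T⁻¹ * revMat (n + 2) := by
          simp only [Matrix.mul_assoc]
      _ = revMat (n + 1) * (S * D₂ᵀ * T⁻¹) * revMat (n + 2) := by
          simp only [revMat_sq]; simp only [Matrix.mul_one, Matrix.one_mul, Matrix.mul_assoc]
  · rw [reverseRel_iff]
    calc S⁻¹ * C₁ * S
        = (revMat (n + 1) * S⁻¹ * revMat (n + 1)) * (revMat (n + 1) * C₂ * revMat (n + 1)) *
            (revMat (n + 1) * S * revMat (n + 1)) := by rw [← hSic, ← hC', ← hSc]
      _ = revMat (n + 1) * S⁻¹ * (revMat (n + 1) * revMat (n + 1)) * C₂ *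
            (revMat (n + 1) * revMat (n + 1)) * S * revMat (n + 1) := by
          simp only [Matrix.mul_assoc]
      _ = revMat (n + 1) * (S⁻¹ * C₂ * S) * revMat (n + 1) := by
          simp only [revMat_sq]; simp only [Matrix.mul_one, Matrix.one_mul, Matrix.mul_assoc]
end

section
/- Fix n ≥ 2. Let Q₀,…,Qₙ, Q̃₀,…,Q̃ₙ, Q̃′₀,…,Q̃′_{n−1}, and Q̃″₀,…,Q̃″_{n−2} be families of polynomials in ℝ[x,y], each of which is a reflexive polynomial vector (σ(Qₖ) = Q_{n−k}, σ(Q̃ₖ) = Q̃_{n−k}, σ(Q̃′ₖ) = Q̃′_{n−1−k}, σ(Q̃″ₖ) = Q̃″_{n−2−k}). Suppose the combined family {Q̃′₀,…,Q̃′_{n−1}, Q̃″₀,…,Q̃″_{n−2}} is linearly independent over ℝ, and suppose there are real matrices R of size (n+1)×n and S of size (n+1)×(n−1) such that Qₖ = Q̃ₖ + Σ_{j=0}^{n−1} R_{kj} Q̃′ⱼ + Σ_{j=0}^{n−2} S_{kj} Q̃″ⱼ for every k = 0,…,n. Then R and S are centrosymmetric matrices. -/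
open MvPolynomial

/-- The ℝ-algebra automorphism of `ℝ[x,y]` interchanging the two variables. -/
noncomputable def swapVars : MvPolynomial (Fin 2) ℝ →ₐ[ℝ] MvPolynomial (Fin 2) ℝ :=
  MvPolynomial.rename ⇑(Equiv.swap (0 : Fin 2) 1)

/-- Christoffel connection formula for `n = m + 2 ≥ 2`.  If `Q` (size `n+1`), `Q̃`
(size `n+1`), `Q̃′` (size `n`) and `Q̃″` (size `n-1`) are reflexive polynomial vectors,
`{Q̃′, Q̃″}` is linearly independent, and
`Qₖ = Q̃ₖ + Σⱼ Rₖⱼ Q̃′ⱼ + Σⱼ Sₖⱼ Q̃″ⱼ`, then `R` and `S` are centrosymmetric. -/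
theorem christoffel_connection_matrices_centrosymmetric (m : ℕ)
    (Q Qt : Fin (m + 3) → MvPolynomial (Fin 2) ℝ)
    (Qt' : Fin (m + 2) → MvPolynomial (Fin 2) ℝ)
    (Qt'' : Fin (m + 1) → MvPolynomial (Fin 2) ℝ)
    (hQ : ∀ k, swapVars (Q k) = Q k.rev)
    (hQt : ∀ k, swapVars (Qt k) = Qt k.rev)
    (hQt' : ∀ k, swapVars (Qt' k) = Qt' k.rev)
    (hQt'' : ∀ k, swapVars (Qt'' k) = Qt'' k.rev)
    (hli : LinearIndependent ℝ (Sum.elim Qt' Qt''))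
    (R : Matrix (Fin (m + 3)) (Fin (m + 2)) ℝ)
    (S : Matrix (Fin (m + 3)) (Fin (m + 1)) ℝ)
    (hconn : ∀ k : Fin (m + 3),
      Q k = Qt k + ∑ j, R k j • Qt' j + ∑ j, S k j • Qt'' j) :
    Centrosymmetric R ∧ Centrosymmetric S := by
  have key : ∀ k : Fin (m + 3),
      (∀ j, R k.rev j - R k j.rev = 0) ∧ (∀ j, S k.rev j - S k j.rev = 0) := by
    intro k
    have h1 := congrArg swapVars (hconn k)
    rw [hQ, map_add, map_add, hQt, map_sum, map_sum] at h1
    simp only [map_smul, hQt', hQt''] at h1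
    rw [hconn k.rev] at h1
    have hR : ∑ j, R k j • Qt' j.rev = ∑ j, R k j.rev • Qt' j :=
      Fintype.sum_equiv Fin.revPerm _ _ (fun j => by simp)
    have hS : ∑ j, S k j • Qt'' j.rev = ∑ j, S k j.rev • Qt'' j :=
      Fintype.sum_equiv Fin.revPerm _ _ (fun j => by simp)
    rw [hR, hS] at h1
    have hzero : ∑ i, (Sum.elim (fun j => R k.rev j - R k j.rev)
        (fun j => S k.rev j - S k j.rev) i) • Sum.elim Qt' Qt'' i = 0 := by
      rw [Fintype.sum_sum_type]
      simp only [Sum.elim_inl, Sum.elim_inr, sub_smul, Finset.sum_sub_distrib]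
      have := sub_eq_zero.mpr h1
      abel_nf
      abel_nf at this
      linear_combination (norm := module) this
    have := Fintype.linearIndependent_iff.mp hli _ hzero
    exact ⟨fun j => this (Sum.inl j), fun j => this (Sum.inr j)⟩
  constructor
  · intro i j
    have := (key i).1 j.rev
    simp only [Fin.rev_rev] at this ⊢
    linarith [(key i.rev).1 j]
  · intro i j
    have := (key i).2 j.rev
    simp only [Fin.rev_rev] at this ⊢
    linarith [(key i.rev).2 j]
end
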